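/- Let f*_{A,i*} ∈ ℝ^d (i* ∈ {1,…,n_A*}) and f*_{B,j*} ∈ ℝ^d (j* ∈ {1,…,n_B*}) be fixed feature vectors, and let p_A, p_B be probability vectors on {1,…,n_A*} and {1,…,n_B*} with strictly positive entries. Let (ι_k)_{k≥1} and (κ_l)_{l≥1} be independent i.i.d. sequences with laws p_A and p_B, and for sample sizes n_A, n_B set f_{A,k} = f*_{A,ι_k} (k ≤ n_A) and f_{B,l} = f*_{B,κ_l} (l ≤ n_B). Fix a dustbin score α ∈ ℝ, a regularization parameter ε > 0, and a number of Sinkhorn iterations L ∈ ℕ. Let OT denote the assignment matrix computed by L Sinkhorn iterations on the α-augmented score matrix of the sampled features with uniform marginals (a_k = 1/n_A for k ≤ n_A, a_{n_A+1} = 1; b_l = 1/n_B for l ≤ n_B, b_{n_B+1} = 1), and let OT^{p_A,p_B} denote the assignment computed by L Sinkhorn iterations on the α-augmented score matrix of the fixed features with marginals (a*_{i*} = p_A(i*), a*_{n_A*+1} = 1; b*_{j*} = p_B(j*), b*_{n_B*+1} = 1). Then for every i* ∈ {1,…,n_A*} and j* ∈ {1,…,n_B*}, as n_A, n_B → ∞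 jointly, Σ_{k ≤ n_A : ι_k = i*} Σ_{l ≤ n_B : κ_l = j*} OT_{k,l} → OT^{p_A,p_B}_{i*,j*} in probability. -/

import Mathlib

open MeasureTheory Filter Finset ProbabilityTheory

noncomputable section

/-- `X` converges to `Y` in probability (w.r.t. the measure `P`) along the filter `l`. -/
def TendstoInProb {Ω : Type*} [MeasurableSpace Ω] (P : Measure Ω)
    {ι : Type*} (l : Filter ι) {E : Type*} [Dist E]
    (X : ι → Ω → E) (Y : Ω → E) : Prop :=
  ∀ ε : ℝ, 0 < ε → Tendsto (fun n => P {ω | ε < dist (X n ω) (Y ω)}) l (nhds 0)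

/-- `L` Sinkhorn iterations for a kernel matrix with rows `0,…,nA` and columns `0,…,nB`
(the indices `nA` and `nB` playing the role of the dustbin row/column), marginals `a`, `b`,
initialized at `u = a`, `v = b`; each iteration performs `uᵢ ← aᵢ/(Kv)ᵢ` and then
`vⱼ ← bⱼ/(Kᵀu)ⱼ` (with the updated `u`).  Matrices and vectors are modelled as functions
on `ℕ`; only the entries with index `≤ nA` (resp. `≤ nB`) are relevant. -/
def sinkhorn (nA nB : ℕ) (Km : ℕ → ℕ → ℝ) (a b : ℕ → ℝ) : ℕ → (ℕ → ℝ) × (ℕ → ℝ)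
  | 0 => (a, b)
  | L + 1 =>
    let uv := sinkhorn nA nB Km a b L
    let u : ℕ → ℝ := fun i => a i / ∑ j ∈ Finset.range (nB + 1), Km i j * uv.2 j
    let v : ℕ → ℝ := fun j => b j / ∑ i ∈ Finset.range (nA + 1), Km i j * u i
    (u, v)

/-- The `α`-augmented score matrix of the sampled features: entry `(i,j)` equals
`⟨f_{A,i}, f_{B,j}⟩` for `i < nA`, `j < nB` and the dustbin score `α` on the last row and
column. -/
def sampledScore {Ωt : Type*} {d nAs nBs : ℕ}
    (fAstar : Fin nAs → Fin d → ℝ) (fBstar : Fin nBs → Fin d → ℝ) (α : ℝ)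
    (ι : ℕ → Ωt → Fin nAs) (κ : ℕ → Ωt → Fin nBs)
    (nA nB : ℕ) (ω : Ωt) : ℕ → ℕ → ℝ := fun i j =>
  if i < nA ∧ j < nB then ∑ a, fAstar (ι i ω) a * fBstar (κ j ω) a else α

/-- The `α`-augmented score matrix of the fixed features, as a function on `ℕ × ℕ`
(rows `0,…,nAs`, columns `0,…,nBs`, with dustbin row `nAs` and dustbin column `nBs`). -/
def fixedScore {d nAs nBs : ℕ}
    (fAstar : Fin nAs → Fin d → ℝ) (fBstar : Fin nBs → Fin d → ℝ) (α : ℝ) :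
    ℕ → ℕ → ℝ := fun i j =>
  if h : i < nAs then
    if h' : j < nBs then ∑ a, fAstar ⟨i, h⟩ a * fBstar ⟨j, h'⟩ a else α
  else α

/-- Uniform marginals with a unit dustbin entry: `aᵢ = 1/n` for `i < n`, and `1` otherwise
(in particular at the dustbin index `n`). -/
def uniformMarginal (n : ℕ) : ℕ → ℝ := fun i => if i < n then (n : ℝ)⁻¹ else 1

/-- Probability marginals with a unit dustbin entry: `aᵢ = p i` for `i < n`, and `1`
otherwise (in particular at the dustbin index `n`). -/
def probMarginal {n : ℕ} (p : Fin n → ℝ) : ℕ → ℝ := fun i =>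
  if h : i < n then p ⟨i, h⟩ else 1

open Topology

lemma sinkhorn_succ_fst (nA nB : ℕ) (Km : ℕ → ℕ → ℝ) (a b : ℕ → ℝ) (m : ℕ) (i : ℕ) :
    (sinkhorn nA nB Km a b (m+1)).1 i
      = a i / ∑ j ∈ Finset.range (nB + 1), Km i j * (sinkhorn nA nB Km a b m).2 j := rfl

lemma sinkhorn_succ_snd (nA nB : ℕ) (Km : ℕ → ℕ → ℝ) (a b : ℕ → ℝ) (m : ℕ) (j : ℕ) :
    (sinkhorn nA nB Km a b (m+1)).2 j
      = b j / ∑ i ∈ Finset.range (nA + 1), Km i j * (sinkhorn nA nB Km a b (m+1)).1 i := rfl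

/-- number of samples among the first n mapping to i -/
def sCount (n : ℕ) {m : ℕ} (f : ℕ → Fin m) (i : Fin m) : ℕ :=
  ((Finset.range n).filter fun k => f k = i).card

def sFreq (n : ℕ) {m : ℕ} (f : ℕ → Fin m) (i : Fin m) : ℝ := (sCount n f i : ℝ) / n

lemma fiber_sum {m : ℕ} (n : ℕ) (f : ℕ → Fin m) (g : Fin m → ℝ) :
    ∑ l ∈ Finset.range n, g (f l) = ∑ j : Fin m, (sCount n f j : ℝ) * g j := by
  rw [← Finset.sum_fiberwise_of_maps_to (g := f) (fun x _ => Finset.mem_univ (f x)) (fun l => g (f l))]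
  refine Finset.sum_congr rfl fun j _ => ?_
  rw [Finset.sum_congr rfl (fun x hx => by
    rw [(Finset.mem_filter.1 hx).2]), Finset.sum_const, sCount, nsmul_eq_mul]

lemma div_div_self_left {a b : ℝ} (ha : a ≠ 0) : a / b / a = b⁻¹ := by
  rcases eq_or_ne b 0 with rfl|hb; · simp
  field_simp

lemma div_div_div_self_left {a b c : ℝ} (ha : a ≠ 0) : (a / b / c) / a = b⁻¹ / c := by
  rcases eq_or_ne b 0 with rfl|hb
  · simp
  rcases eq_or_ne c 0 with rfl|hc; · simp
  field_simp

lemma probMarginal_coe {n : ℕ} (p : Fin n → ℝ) (i : Fin n) : probMarginal p ↑i = p i := by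
  simp [probMarginal]

lemma probMarginal_dust {n : ℕ} (p : Fin n → ℝ) : probMarginal p n = 1 :=
  dif_neg (lt_irrefl n)

section Collapse
variable {nAs nBs : ℕ} (Kf : ℕ → ℕ → ℝ) (c : ℝ)
  (nA nB : ℕ) (iS : ℕ → Fin nAs) (jS : ℕ → Fin nBs) (KmS : ℕ → ℕ → ℝ)

lemma row_sum_eq (i r : ℕ)
    (h1 : ∀ l, l < nB → KmS i l = Kf r ↑(jS l))
    (h2 : KmS i nB = c) (hrc : Kf r nBs = c)
    (v V : ℕ → ℝ)
    (hv : ∀ l, l < nB → v l = V ↑(jS l) / (sCount nB jS (jS l) : ℝ))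
    (hvd : v nB = V nBs)
    (hV0 : ∀ j : Fin nBs, sCount nB jS j = 0 → V ↑j = 0) :
    ∑ j ∈ Finset.range (nB+1), KmS i j * v j
      = ∑ j ∈ Finset.range (nBs+1), Kf r j * V j := by
  rw [Finset.sum_range_succ, Finset.sum_range_succ, h2, hvd, hrc]
  congr 1
  have hterm : ∀ l ∈ Finset.range nB, KmS i l * v l
      = (fun j : Fin nBs => Kf r ↑j * (V ↑j / (sCount nB jS j : ℝ))) (jS l) := by
    intro l hl
    have hl' := Finset.mem_range.1 hl
    rw [h1 l hl', hv l hl']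
  rw [Finset.sum_congr rfl hterm,
    fiber_sum nB jS (fun j : Fin nBs => Kf r ↑j * (V ↑j / (sCount nB jS j : ℝ))),
    ← Fin.sum_univ_eq_sum_range (fun j => Kf r j * V j) nBs]
  refine Finset.sum_congr rfl fun j _ => ?_
  rcases Nat.eq_zero_or_pos (sCount nB jS j) with h0 | hpos
  · simp [h0, hV0 j h0]
  · have hc0 : (sCount nB jS j : ℝ) ≠ 0 := Nat.cast_ne_zero.2 hpos.ne'
    field_simp

lemma col_sum_eq (j r : ℕ)
    (h1 : ∀ k, k < nA → KmS k j = Kf ↑(iS k) r)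
    (h2 : KmS nA j = c) (hrc : Kf nAs r = c)
    (u U : ℕ → ℝ)
    (hu : ∀ k, k < nA → u k = U ↑(iS k) / (sCount nA iS (iS k) : ℝ))
    (hud : u nA = U nAs)
    (hU0 : ∀ i : Fin nAs, sCount nA iS i = 0 → U ↑i = 0) :
    ∑ i ∈ Finset.range (nA+1), KmS i j * u i
      = ∑ i ∈ Finset.range (nAs+1), Kf i r * U i := by
  rw [Finset.sum_range_succ, Finset.sum_range_succ, h2, hud, hrc]
  congr 1
  have hterm : ∀ k ∈ Finset.range nA, KmS k j * u k
      = (fun i : Fin nAs => Kf ↑i r * (U ↑i / (sCount nA iS i : ℝ))) (iS k) := by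
    intro k hk
    have hk' := Finset.mem_range.1 hk
    rw [h1 k hk', hu k hk']
  rw [Finset.sum_congr rfl hterm,
    fiber_sum nA iS (fun i : Fin nAs => Kf ↑i r * (U ↑i / (sCount nA iS i : ℝ))),
    ← Fin.sum_univ_eq_sum_range (fun i => Kf i r * U i) nAs]
  refine Finset.sum_congr rfl fun i _ => ?_
  rcases Nat.eq_zero_or_pos (sCount nA iS i) with h0 | hpos
  · simp [h0, hU0 i h0]
  · have hc0 : (sCount nA iS i : ℝ) ≠ 0 := Nat.cast_ne_zero.2 hpos.ne'
    field_simp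

end Collapse

section Collapse2
variable {nAs nBs : ℕ} (Kf : ℕ → ℕ → ℝ) (c : ℝ)
  (nA nB : ℕ) (iS : ℕ → Fin nAs) (jS : ℕ → Fin nBs) (KmS : ℕ → ℕ → ℝ)

lemma sCount_pos_of_lt {n : ℕ} {m : ℕ} {f : ℕ → Fin m} {k : ℕ} (hk : k < n) :
    0 < sCount n f (f k) :=
  Finset.card_pos.2 ⟨k, Finset.mem_filter.2 ⟨Finset.mem_range.2 hk, rfl⟩⟩

lemma collapse_inv
    (hrow : ∀ j, Kf nAs j = c) (hcol : ∀ i, Kf i nBs = c)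
    (hKm : ∀ k l, KmS k l = if k < nA ∧ l < nB then Kf ↑(iS k) ↑(jS l) else c)
    (m : ℕ) :
    (∀ k, k < nA →
      (sinkhorn nA nB KmS (uniformMarginal nA) (uniformMarginal nB) m).1 k
        = (sinkhorn nAs nBs Kf (probMarginal (sFreq nA iS)) (probMarginal (sFreq nB jS)) m).1
            ↑(iS k) / (sCount nA iS (iS k) : ℝ)) ∧
    ((sinkhorn nA nB KmS (uniformMarginal nA) (uniformMarginal nB) m).1 nA
      = (sinkhorn nAs nBs Kf (probMarginal (sFreq nA iS)) (probMarginal (sFreq nB jS)) m).1 nAs) ∧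
    (∀ i : Fin nAs, sCount nA iS i = 0 →
      (sinkhorn nAs nBs Kf (probMarginal (sFreq nA iS)) (probMarginal (sFreq nB jS)) m).1 ↑i = 0) ∧
    (∀ l, l < nB →
      (sinkhorn nA nB KmS (uniformMarginal nA) (uniformMarginal nB) m).2 l
        = (sinkhorn nAs nBs Kf (probMarginal (sFreq nA iS)) (probMarginal (sFreq nB jS)) m).2
            ↑(jS l) / (sCount nB jS (jS l) : ℝ)) ∧
    ((sinkhorn nA nB KmS (uniformMarginal nA) (uniformMarginal nB) m).2 nB
      = (sinkhorn nAs nBs Kf (probMarginal (sFreq nA iS)) (probMarginal (sFreq nB jS)) m).2 nBs) ∧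
    (∀ j : Fin nBs, sCount nB jS j = 0 →
      (sinkhorn nAs nBs Kf (probMarginal (sFreq nA iS)) (probMarginal (sFreq nB jS)) m).2 ↑j = 0) := by
  induction m with
  | zero =>
    refine ⟨fun k hk => ?_, ?_, fun i h0 => ?_, fun l hl => ?_, ?_, fun j h0 => ?_⟩
    · have hcA : (sCount nA iS (iS k) : ℝ) ≠ 0 :=
        Nat.cast_ne_zero.2 (sCount_pos_of_lt hk).ne'
      show uniformMarginal nA k = probMarginal (sFreq nA iS) ↑(iS k) / _
      rw [probMarginal_coe, sFreq, uniformMarginal, if_pos hk, div_div_self_left hcA]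
    · show uniformMarginal nA nA = probMarginal (sFreq nA iS) nAs
      rw [probMarginal_dust, uniformMarginal, if_neg (lt_irrefl nA)]
    · show probMarginal (sFreq nA iS) ↑i = 0
      rw [probMarginal_coe, sFreq, h0]; simp
    · have hcB : (sCount nB jS (jS l) : ℝ) ≠ 0 :=
        Nat.cast_ne_zero.2 (sCount_pos_of_lt hl).ne'
      show uniformMarginal nB l = probMarginal (sFreq nB jS) ↑(jS l) / _
      rw [probMarginal_coe, sFreq, uniformMarginal, if_pos hl, div_div_self_left hcB]
    · show uniformMarginal nB nB = probMarginal (sFreq nB jS) nBs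
      rw [probMarginal_dust, uniformMarginal, if_neg (lt_irrefl nB)]
    · show probMarginal (sFreq nB jS) ↑j = 0
      rw [probMarginal_coe, sFreq, h0]; simp
  | succ m ih =>
    obtain ⟨ihu, ihud, ihu0, ihv, ihvd, ihv0⟩ := ih
    have hrowk : ∀ k, k < nA →
        ∑ j ∈ Finset.range (nB+1), KmS k j *
            (sinkhorn nA nB KmS (uniformMarginal nA) (uniformMarginal nB) m).2 j
          = ∑ j ∈ Finset.range (nBs+1), Kf ↑(iS k) j *
            (sinkhorn nAs nBs Kf (probMarginal (sFreq nA iS)) (probMarginal (sFreq nB jS)) m).2 j := by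
      intro k hk
      refine row_sum_eq Kf c nB jS KmS k ↑(iS k) (fun l hl => ?_) ?_ (hcol _) _ _ ihv ihvd ihv0
      · rw [hKm, if_pos ⟨hk, hl⟩]
      · rw [hKm, if_neg (by simp)]
    have hrowd :
        ∑ j ∈ Finset.range (nB+1), KmS nA j *
            (sinkhorn nA nB KmS (uniformMarginal nA) (uniformMarginal nB) m).2 j
          = ∑ j ∈ Finset.range (nBs+1), Kf nAs j *
            (sinkhorn nAs nBs Kf (probMarginal (sFreq nA iS)) (probMarginal (sFreq nB jS)) m).2 j := by
      refine row_sum_eq Kf c nB jS KmS nA nAs (fun l hl => ?_) ?_ (hrow _) _ _ ihv ihvd ihv0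
      · rw [hKm, if_neg (by simp), hrow]
      · rw [hKm, if_neg (by simp)]
    have hu : ∀ k, k < nA →
        (sinkhorn nA nB KmS (uniformMarginal nA) (uniformMarginal nB) (m+1)).1 k
          = (sinkhorn nAs nBs Kf (probMarginal (sFreq nA iS)) (probMarginal (sFreq nB jS)) (m+1)).1
              ↑(iS k) / (sCount nA iS (iS k) : ℝ) := by
      intro k hk
      have hcA : (sCount nA iS (iS k) : ℝ) ≠ 0 :=
        Nat.cast_ne_zero.2 (sCount_pos_of_lt hk).ne'
      rw [sinkhorn_succ_fst, sinkhorn_succ_fst, hrowk k hk, probMarginal_coe, sFreq,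
        uniformMarginal, if_pos hk, div_div_div_self_left hcA]
    have hud :
        (sinkhorn nA nB KmS (uniformMarginal nA) (uniformMarginal nB) (m+1)).1 nA
          = (sinkhorn nAs nBs Kf (probMarginal (sFreq nA iS)) (probMarginal (sFreq nB jS)) (m+1)).1 nAs := by
      rw [sinkhorn_succ_fst, sinkhorn_succ_fst, hrowd, probMarginal_dust,
        uniformMarginal, if_neg (lt_irrefl nA)]
    have hu0 : ∀ i : Fin nAs, sCount nA iS i = 0 →
        (sinkhorn nAs nBs Kf (probMarginal (sFreq nA iS)) (probMarginal (sFreq nB jS)) (m+1)).1 ↑i = 0 := by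
      intro i h0
      rw [sinkhorn_succ_fst, probMarginal_coe, sFreq, h0]
      simp
    have hcoll : ∀ l, l < nB →
        ∑ i ∈ Finset.range (nA+1), KmS i l *
            (sinkhorn nA nB KmS (uniformMarginal nA) (uniformMarginal nB) (m+1)).1 i
          = ∑ i ∈ Finset.range (nAs+1), Kf i ↑(jS l) *
            (sinkhorn nAs nBs Kf (probMarginal (sFreq nA iS)) (probMarginal (sFreq nB jS)) (m+1)).1 i := by
      intro l hl
      refine col_sum_eq Kf c nA iS KmS l ↑(jS l) (fun k hk => ?_) ?_ (hrow _) _ _ hu hud hu0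
      · rw [hKm, if_pos ⟨hk, hl⟩]
      · rw [hKm, if_neg (by simp)]
    have hcold :
        ∑ i ∈ Finset.range (nA+1), KmS i nB *
            (sinkhorn nA nB KmS (uniformMarginal nA) (uniformMarginal nB) (m+1)).1 i
          = ∑ i ∈ Finset.range (nAs+1), Kf i nBs *
            (sinkhorn nAs nBs Kf (probMarginal (sFreq nA iS)) (probMarginal (sFreq nB jS)) (m+1)).1 i := by
      refine col_sum_eq Kf c nA iS KmS nB nBs (fun k hk => ?_) ?_ (hrow _) _ _ hu hud hu0
      · rw [hKm, if_neg (by simp), hcol]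
      · rw [hKm, if_neg (by simp)]
    refine ⟨hu, hud, hu0, fun l hl => ?_, ?_, fun j h0 => ?_⟩
    · have hcB : (sCount nB jS (jS l) : ℝ) ≠ 0 :=
        Nat.cast_ne_zero.2 (sCount_pos_of_lt hl).ne'
      rw [sinkhorn_succ_snd, sinkhorn_succ_snd, hcoll l hl, probMarginal_coe, sFreq,
        uniformMarginal, if_pos hl, div_div_div_self_left hcB]
    · rw [sinkhorn_succ_snd, sinkhorn_succ_snd, hcold, probMarginal_dust,
        uniformMarginal, if_neg (lt_irrefl nB)]
    · rw [sinkhorn_succ_snd, probMarginal_coe, sFreq, h0]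
      simp

end Collapse2

section Collapse3
variable {nAs nBs : ℕ} (Kf : ℕ → ℕ → ℝ) (c : ℝ)
  (nA nB : ℕ) (iS : ℕ → Fin nAs) (jS : ℕ → Fin nBs) (KmS : ℕ → ℕ → ℝ)

lemma collapse_out
    (hrow : ∀ j, Kf nAs j = c) (hcol : ∀ i, Kf i nBs = c)
    (hKm : ∀ k l, KmS k l = if k < nA ∧ l < nB then Kf ↑(iS k) ↑(jS l) else c)
    (L : ℕ) (istar : Fin nAs) (jstar : Fin nBs) :
    ∑ k ∈ Finset.range nA, ∑ l ∈ Finset.range nB,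
        (if iS k = istar ∧ jS l = jstar then
          (sinkhorn nA nB KmS (uniformMarginal nA) (uniformMarginal nB) L).1 k * KmS k l *
          (sinkhorn nA nB KmS (uniformMarginal nA) (uniformMarginal nB) L).2 l else 0)
      = (sinkhorn nAs nBs Kf (probMarginal (sFreq nA iS)) (probMarginal (sFreq nB jS)) L).1 ↑istar
        * Kf ↑istar ↑jstar *
        (sinkhorn nAs nBs Kf (probMarginal (sFreq nA iS)) (probMarginal (sFreq nB jS)) L).2 ↑jstar := by
  obtain ⟨hu, -, hu0, hv, -, hv0⟩ := collapse_inv Kf c nA nB iS jS KmS hrow hcol hKm L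
  set U := (sinkhorn nAs nBs Kf (probMarginal (sFreq nA iS)) (probMarginal (sFreq nB jS)) L).1 ↑istar with hU
  set V := (sinkhorn nAs nBs Kf (probMarginal (sFreq nA iS)) (probMarginal (sFreq nB jS)) L).2 ↑jstar with hV
  set C : ℝ := U / (sCount nA iS istar : ℝ) * Kf ↑istar ↑jstar * (V / (sCount nB jS jstar : ℝ)) with hC
  have hterm : ∀ k ∈ Finset.range nA, ∀ l ∈ Finset.range nB,
      (if iS k = istar ∧ jS l = jstar then
        (sinkhorn nA nB KmS (uniformMarginal nA) (uniformMarginal nB) L).1 k * KmS k l *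
        (sinkhorn nA nB KmS (uniformMarginal nA) (uniformMarginal nB) L).2 l else 0)
      = (if iS k = istar then (1:ℝ) else 0) * (if jS l = jstar then C else 0) := by
    intro k hk l hl
    have hk' := Finset.mem_range.1 hk
    have hl' := Finset.mem_range.1 hl
    by_cases h1 : iS k = istar
    · by_cases h2 : jS l = jstar
      · rw [if_pos ⟨h1, h2⟩, if_pos h1, if_pos h2, one_mul, hu k hk', hv l hl',
          hKm, if_pos ⟨hk', hl'⟩, h1, h2, hC]
      · simp [h1, h2]
    · simp [h1]
  calc ∑ k ∈ Finset.range nA, ∑ l ∈ Finset.range nB,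
        (if iS k = istar ∧ jS l = jstar then
          (sinkhorn nA nB KmS (uniformMarginal nA) (uniformMarginal nB) L).1 k * KmS k l *
          (sinkhorn nA nB KmS (uniformMarginal nA) (uniformMarginal nB) L).2 l else 0)
      = ∑ k ∈ Finset.range nA, (if iS k = istar then (1:ℝ) else 0) *
          ∑ l ∈ Finset.range nB, (if jS l = jstar then C else 0) := by
        refine Finset.sum_congr rfl fun k hk => ?_
        rw [Finset.mul_sum]
        exact Finset.sum_congr rfl fun l hl => hterm k hk l hl
    _ = (sCount nA iS istar : ℝ) * ((sCount nB jS jstar : ℝ) * C) := by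
        rw [← Finset.sum_mul]
        congr 1
        · rw [← Finset.sum_filter, Finset.sum_const, nsmul_eq_mul, mul_one, sCount]
        · rw [← Finset.sum_filter, Finset.sum_const, nsmul_eq_mul, sCount]
    _ = U * Kf ↑istar ↑jstar * V := by
        rcases Nat.eq_zero_or_pos (sCount nA iS istar) with h0 | hposA
        · rw [h0, hU, hu0 istar h0]; simp
        rcases Nat.eq_zero_or_pos (sCount nB jS jstar) with h0 | hposB
        · rw [h0, hV, hv0 jstar h0]; simp
        have hA : (sCount nA iS istar : ℝ) ≠ 0 := Nat.cast_ne_zero.2 hposA.ne'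
        have hB : (sCount nB jS jstar : ℝ) ≠ 0 := Nat.cast_ne_zero.2 hposB.ne'
        rw [hC]
        field_simp

end Collapse3

section Cont
variable {nAs nBs : ℕ} (Kf : ℕ → ℕ → ℝ) (hK : ∀ i j, 0 < Kf i j)
  (pA : Fin nAs → ℝ) (pB : Fin nBs → ℝ) (hpA : ∀ i, 0 < pA i) (hpB : ∀ j, 0 < pB j)

lemma probMarginal_pos {n : ℕ} {p : Fin n → ℝ} (hp : ∀ i, 0 < p i) (i : ℕ) :
    0 < probMarginal p i := by
  unfold probMarginal; split
  · exact hp _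
  · exact one_pos

lemma probMarginal_contAt {n n' : ℕ} (q : Fin n → ℝ) (q' : Fin n' → ℝ) (i : ℕ) :
    ContinuousAt (fun ab : (Fin n → ℝ) × (Fin n' → ℝ) => probMarginal ab.1 i) (q, q') := by
  unfold probMarginal
  by_cases h : i < n
  · simp only [dif_pos h]
    exact ((continuous_apply _).comp continuous_fst).continuousAt
  · simp only [dif_neg h]
    exact continuousAt_const

lemma probMarginal_contAt' {n n' : ℕ} (q : Fin n → ℝ) (q' : Fin n' → ℝ) (j : ℕ) :
    ContinuousAt (fun ab : (Fin n → ℝ) × (Fin n' → ℝ) => probMarginal ab.2 j) (q, q') := by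
  unfold probMarginal
  by_cases h : j < n'
  · simp only [dif_pos h]
    exact ((continuous_apply _).comp continuous_snd).continuousAt
  · simp only [dif_neg h]
    exact continuousAt_const

include hK hpA hpB in
lemma sinkhorn_cont (m : ℕ) :
    (∀ i : ℕ,
      ContinuousAt (fun ab : (Fin nAs → ℝ) × (Fin nBs → ℝ) =>
        (sinkhorn nAs nBs Kf (probMarginal ab.1) (probMarginal ab.2) m).1 i) (pA, pB)
      ∧ 0 < (sinkhorn nAs nBs Kf (probMarginal pA) (probMarginal pB) m).1 i)
    ∧ (∀ j : ℕ,
      ContinuousAt (fun ab : (Fin nAs → ℝ) × (Fin nBs → ℝ) =>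
        (sinkhorn nAs nBs Kf (probMarginal ab.1) (probMarginal ab.2) m).2 j) (pA, pB)
      ∧ 0 < (sinkhorn nAs nBs Kf (probMarginal pA) (probMarginal pB) m).2 j) := by
  induction m with
  | zero =>
    exact ⟨fun i => ⟨probMarginal_contAt pA pB i, probMarginal_pos hpA i⟩,
      fun j => ⟨probMarginal_contAt' pA pB j, probMarginal_pos hpB j⟩⟩
  | succ m ih =>
    obtain ⟨ihu, ihv⟩ := ih
    have hu : ∀ i : ℕ,
        ContinuousAt (fun ab : (Fin nAs → ℝ) × (Fin nBs → ℝ) =>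
          (sinkhorn nAs nBs Kf (probMarginal ab.1) (probMarginal ab.2) (m+1)).1 i) (pA, pB)
        ∧ 0 < (sinkhorn nAs nBs Kf (probMarginal pA) (probMarginal pB) (m+1)).1 i := by
      intro i
      have hden_pos : 0 < ∑ j ∈ Finset.range (nBs+1),
          Kf i j * (sinkhorn nAs nBs Kf (probMarginal pA) (probMarginal pB) m).2 j :=
        Finset.sum_pos (fun j _ => mul_pos (hK i j) (ihv j).2) Finset.nonempty_range_add_one
      have hden_cont : ContinuousAt (fun ab : (Fin nAs → ℝ) × (Fin nBs → ℝ) =>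
          ∑ j ∈ Finset.range (nBs+1),
            Kf i j * (sinkhorn nAs nBs Kf (probMarginal ab.1) (probMarginal ab.2) m).2 j) (pA, pB) :=
        tendsto_finset_sum _ (fun j _ => (tendsto_const_nhds.mul (ihv j).1 : _))
      constructor
      · simp only [sinkhorn_succ_fst]
        exact (probMarginal_contAt pA pB i).div hden_cont hden_pos.ne'
      · rw [sinkhorn_succ_fst]
        exact div_pos (probMarginal_pos hpA i) hden_pos
    refine ⟨hu, fun j => ?_⟩
    have hden_pos : 0 < ∑ i ∈ Finset.range (nAs+1),
        Kf i j * (sinkhorn nAs nBs Kf (probMarginal pA) (probMarginal pB) (m+1)).1 i :=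
      Finset.sum_pos (fun i _ => mul_pos (hK i j) (hu i).2) Finset.nonempty_range_add_one
    have hden_cont : ContinuousAt (fun ab : (Fin nAs → ℝ) × (Fin nBs → ℝ) =>
        ∑ i ∈ Finset.range (nAs+1),
          Kf i j * (sinkhorn nAs nBs Kf (probMarginal ab.1) (probMarginal ab.2) (m+1)).1 i) (pA, pB) :=
      tendsto_finset_sum _ (fun i _ => (tendsto_const_nhds.mul (hu i).1 : _))
    constructor
    · simp only [sinkhorn_succ_snd]
      exact (probMarginal_contAt' pA pB j).div hden_cont hden_pos.ne'
    · rw [sinkhorn_succ_snd]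
      exact div_pos (probMarginal_pos hpB j) hden_pos

end Cont

section WLLN
variable {Ω : Type*} [MeasurableSpace Ω] (P : Measure Ω) [IsProbabilityMeasure P]

lemma wlln {n : ℕ} (X : ℕ → Ω → Fin n) (p : Fin n → ℝ) (hp : ∀ i, 0 < p i)
    (hmeas : ∀ k, Measurable (X k))
    (hlaw : ∀ k i, P {ω | X k ω = i} = ENNReal.ofReal (p i))
    (hindep : iIndepFun X P)
    (i : Fin n) (δ : ℝ) (hδ : 0 < δ) :
    Tendsto (fun N => P {ω | δ ≤ dist (sFreq N (fun k => X k ω) i) (p i)}) atTop (𝓝 0) := by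
  set g : Fin n → ℝ := fun x => if x = i then 1 else 0 with hg
  have hgmeas : Measurable g := measurable_of_countable g
  set Y : ℕ → Ω → ℝ := fun k ω => g (X k ω) with hY
  have hs : ∀ k, MeasurableSet {ω | X k ω = i} := fun k =>
    (hmeas k) (measurableSet_singleton i)
  have hYind : ∀ k, Y k = Set.indicator {ω | X k ω = i} (fun _ => (1:ℝ)) := by
    intro k; funext ω
    simp only [hY, hg, Set.indicator_apply, Set.mem_setOf_eq]
  have hXid : ∀ k, IdentDistrib (X k) (X 0) P P := by
    intro k
    refine ⟨(hmeas k).aemeasurable, (hmeas 0).aemeasurable, ?_⟩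
    refine Measure.ext_of_singleton fun a => ?_
    rw [Measure.map_apply (hmeas k) (measurableSet_singleton a),
      Measure.map_apply (hmeas 0) (measurableSet_singleton a)]
    show P {ω | X k ω = a} = P {ω | X 0 ω = a}
    rw [hlaw k a, hlaw 0 a]
  have hYid : ∀ k, IdentDistrib (Y k) (Y 0) P P := fun k => (hXid k).comp hgmeas
  have hYindep : Pairwise (Function.onFun (IndepFun · · P) Y) := fun k k' hkk' =>
    ((hindep.indepFun hkk').comp hgmeas hgmeas)
  have hint : Integrable (Y 0) P := by
    rw [hYind 0]; exact (integrable_const 1).indicator (hs 0)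
  have hexp : (∫ ω, Y 0 ω ∂P) = p i := by
    rw [hYind 0, MeasureTheory.integral_indicator_const (1:ℝ) (hs 0), measureReal_def, hlaw 0 i,
      smul_eq_mul, mul_one, ENNReal.toReal_ofReal (hp i).le]
  have hae := ProbabilityTheory.strong_law_ae (μ := P) Y hint hYindep hYid
  rw [hexp] at hae
  have hrepr : ∀ (N : ℕ) (ω : Ω),
      (N:ℝ)⁻¹ • ∑ k ∈ Finset.range N, Y k ω = sFreq N (fun k => X k ω) i := by
    intro N ω
    rw [sFreq, sCount, Finset.card_filter, smul_eq_mul, div_eq_inv_mul]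
    congr 1
    push_cast
    rfl
  have hae' : ∀ᵐ ω ∂P,
      Tendsto (fun N => sFreq N (fun k => X k ω) i) atTop (𝓝 (p i)) := by
    filter_upwards [hae] with ω hω
    exact hω.congr fun N => hrepr N ω
  have hfmeas : ∀ N, AEStronglyMeasurable (fun ω => sFreq N (fun k => X k ω) i) P := by
    intro N
    have hm : Measurable (fun ω => (N:ℝ)⁻¹ • ∑ k ∈ Finset.range N, Y k ω) :=
      (Finset.measurable_sum _ fun k _ => hgmeas.comp (hmeas k)).const_smul ((N:ℝ)⁻¹)
    have := funext fun ω => hrepr N ω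
    rw [← this]
    exact hm.aestronglyMeasurable
  have htm : TendstoInMeasure P (fun N ω => sFreq N (fun k => X k ω) i) atTop
      (fun _ => p i) :=
    tendstoInMeasure_of_tendsto_ae hfmeas hae'
  exact tendstoInMeasure_iff_dist.1 htm δ hδ

end WLLN

/-- asymptotic equivalence of Sinkhorn optimal-transport matching on i.i.d.
sampled features (uniform marginals) and reweighted Sinkhorn matching on the fixed features
(probability marginals).  Samples `k ∈ {1,…,n_A}` are modelled as `k ∈ Finset.range n_A`
(0-based), with `f_{A,k} = fAstar (ι k)` and `f_{B,l} = fBstar (κ l)`. -/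
theorem reweighted_optimal_transport_asymptotic
    {Ω : Type*} [MeasurableSpace Ω] (P : Measure Ω) [IsProbabilityMeasure P]
    (d nAs nBs : ℕ) (hd : 0 < d) (hnAs : 0 < nAs) (hnBs : 0 < nBs)
    (fAstar : Fin nAs → Fin d → ℝ) (fBstar : Fin nBs → Fin d → ℝ)
    (pA : Fin nAs → ℝ) (pB : Fin nBs → ℝ)
    (hpA_pos : ∀ i, 0 < pA i) (hpA_sum : ∑ i, pA i = 1)
    (hpB_pos : ∀ j, 0 < pB j) (hpB_sum : ∑ j, pB j = 1)
    (α : ℝ) (ε : ℝ) (hε : 0 < ε) (L : ℕ)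
    (ι : ℕ → Ω → Fin nAs) (κ : ℕ → Ω → Fin nBs)
    (hι_meas : ∀ k, Measurable (ι k)) (hκ_meas : ∀ l, Measurable (κ l))
    -- each `ι k` has law `pA`, each `κ l` has law `pB`
    (hι_law : ∀ k i, P {ω | ι k ω = i} = ENNReal.ofReal (pA i))
    (hκ_law : ∀ l j, P {ω | κ l ω = j} = ENNReal.ofReal (pB j))
    -- each sequence is independent, and the two sequences are independent of each other
    (hι_indep : iIndepFun ι P)
    (hκ_indep : iIndepFun κ P)
    (h_cross : IndepFun (fun ω k => ι k ω) (fun ω l => κ l ω) P) :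
    ∀ (istar : Fin nAs) (jstar : Fin nBs),
      TendstoInProb P (atTop : Filter (ℕ × ℕ))
        (fun nAB ω =>
          let Km : ℕ → ℕ → ℝ := fun i j =>
            Real.exp (sampledScore fAstar fBstar α ι κ nAB.1 nAB.2 ω i j / ε)
          let uv := sinkhorn nAB.1 nAB.2 Km (uniformMarginal nAB.1) (uniformMarginal nAB.2) L
          ∑ k ∈ Finset.range nAB.1, ∑ l ∈ Finset.range nAB.2,
            if ι k ω = istar ∧ κ l ω = jstar then uv.1 k * Km k l * uv.2 l else 0)
        (fun _ =>
          let Km : ℕ → ℕ → ℝ := fun i j =>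
            Real.exp (fixedScore fAstar fBstar α i j / ε)
          let uv := sinkhorn nAs nBs Km (probMarginal pA) (probMarginal pB) L
          uv.1 istar * Km istar jstar * uv.2 jstar) := by
  intro istar jstar
  set Kf : ℕ → ℕ → ℝ := fun i j => Real.exp (fixedScore fAstar fBstar α i j / ε) with hKf
  set c : ℝ := Real.exp (α / ε) with hc
  have hrow : ∀ j, Kf nAs j = c := by
    intro j; rw [hKf, hc]
    simp [fixedScore]
  have hcol : ∀ i, Kf i nBs = c := by
    intro i; rw [hKf, hc]
    simp only [fixedScore]
    split <;> simp
  have hKpos : ∀ i j, 0 < Kf i j := fun i j => Real.exp_pos _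
  set G : (Fin nAs → ℝ) × (Fin nBs → ℝ) → ℝ := fun ab =>
    (sinkhorn nAs nBs Kf (probMarginal ab.1) (probMarginal ab.2) L).1 ↑istar
      * Kf ↑istar ↑jstar *
    (sinkhorn nAs nBs Kf (probMarginal ab.1) (probMarginal ab.2) L).2 ↑jstar with hG
  have hGcont : ContinuousAt G (pA, pB) := by
    obtain ⟨h1, h2⟩ := sinkhorn_cont Kf hKpos pA pB hpA_pos hpB_pos L
    exact (((h1 ↑istar).1.mul continuousAt_const).mul (h2 ↑jstar).1 : _)
  have hKm : ∀ (nAB : ℕ × ℕ) (ω : Ω) (k l : ℕ),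
      Real.exp (sampledScore fAstar fBstar α ι κ nAB.1 nAB.2 ω k l / ε)
        = if k < nAB.1 ∧ l < nAB.2 then Kf ↑(ι k ω) ↑(κ l ω) else c := by
    intro nAB ω k l
    by_cases h : k < nAB.1 ∧ l < nAB.2
    · rw [if_pos h, hKf]
      simp [sampledScore, fixedScore, h]
    · rw [if_neg h, hc]
      simp [sampledScore, h]
  have key : ∀ (nAB : ℕ × ℕ) (ω : Ω),
      (∑ k ∈ Finset.range nAB.1, ∑ l ∈ Finset.range nAB.2,
        if ι k ω = istar ∧ κ l ω = jstar then
          (sinkhorn nAB.1 nAB.2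
              (fun i j => Real.exp (sampledScore fAstar fBstar α ι κ nAB.1 nAB.2 ω i j / ε))
              (uniformMarginal nAB.1) (uniformMarginal nAB.2) L).1 k *
            Real.exp (sampledScore fAstar fBstar α ι κ nAB.1 nAB.2 ω k l / ε) *
          (sinkhorn nAB.1 nAB.2
              (fun i j => Real.exp (sampledScore fAstar fBstar α ι κ nAB.1 nAB.2 ω i j / ε))
              (uniformMarginal nAB.1) (uniformMarginal nAB.2) L).2 l
        else 0)
      = G (sFreq nAB.1 (fun k => ι k ω), sFreq nAB.2 (fun l => κ l ω)) := by
    intro nAB ω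
    exact collapse_out Kf c nAB.1 nAB.2 (fun k => ι k ω) (fun l => κ l ω)
      (fun i j => Real.exp (sampledScore fAstar fBstar α ι κ nAB.1 nAB.2 ω i j / ε))
      hrow hcol (fun k l => hKm nAB ω k l) L istar jstar
  intro εp hεp
  obtain ⟨δ, hδpos, hball⟩ := Metric.continuousAt_iff.1 hGcont εp hεp
  have hA : ∀ i : Fin nAs, Tendsto
      (fun nA => P {ω | δ ≤ dist (sFreq nA (fun k => ι k ω) i) (pA i)}) atTop (𝓝 0) :=
    fun i => wlln P ι pA hpA_pos hι_meas hι_law hι_indep i δ hδpos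
  have hB : ∀ j : Fin nBs, Tendsto
      (fun nB => P {ω | δ ≤ dist (sFreq nB (fun l => κ l ω) j) (pB j)}) atTop (𝓝 0) :=
    fun j => wlln P κ pB hpB_pos hκ_meas hκ_law hκ_indep j δ hδpos
  have hsumA : Tendsto (fun nA => ∑ i : Fin nAs,
      P {ω | δ ≤ dist (sFreq nA (fun k => ι k ω) i) (pA i)}) atTop (𝓝 0) := by
    have := tendsto_finset_sum Finset.univ (fun (i : Fin nAs) _ => hA i)
    simpa using this
  have hsumB : Tendsto (fun nB => ∑ j : Fin nBs,
      P {ω | δ ≤ dist (sFreq nB (fun l => κ l ω) j) (pB j)}) atTop (𝓝 0) := by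
    have := tendsto_finset_sum Finset.univ (fun (j : Fin nBs) _ => hB j)
    simpa using this
  have hBnd : Tendsto (fun nAB : ℕ × ℕ =>
      (∑ i : Fin nAs, P {ω | δ ≤ dist (sFreq nAB.1 (fun k => ι k ω) i) (pA i)}) +
      (∑ j : Fin nBs, P {ω | δ ≤ dist (sFreq nAB.2 (fun l => κ l ω) j) (pB j)}))
      atTop (𝓝 0) := by
    rw [← prod_atTop_atTop_eq]
    have := (hsumA.comp (tendsto_fst : Tendsto Prod.fst (atTop ×ˢ atTop) atTop)).add
      (hsumB.comp (tendsto_snd : Tendsto Prod.snd (atTop ×ˢ atTop) atTop))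
    simpa using this
  have hle : ∀ nAB : ℕ × ℕ,
      P {ω | εp < dist (G (sFreq nAB.1 (fun k => ι k ω), sFreq nAB.2 (fun l => κ l ω)))
          (G (pA, pB))}
      ≤ (∑ i : Fin nAs, P {ω | δ ≤ dist (sFreq nAB.1 (fun k => ι k ω) i) (pA i)}) +
        (∑ j : Fin nBs, P {ω | δ ≤ dist (sFreq nAB.2 (fun l => κ l ω) j) (pB j)}) := by
    intro nAB
    have hsub : {ω | εp < dist (G (sFreq nAB.1 (fun k => ι k ω),
          sFreq nAB.2 (fun l => κ l ω))) (G (pA, pB))}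
        ⊆ (⋃ i : Fin nAs, {ω | δ ≤ dist (sFreq nAB.1 (fun k => ι k ω) i) (pA i)}) ∪
          (⋃ j : Fin nBs, {ω | δ ≤ dist (sFreq nAB.2 (fun l => κ l ω) j) (pB j)}) := by
      intro ω hω
      by_contra hcon
      simp only [Set.mem_union, Set.mem_iUnion, Set.mem_setOf_eq, not_or, not_exists,
        not_le] at hcon
      obtain ⟨h1, h2⟩ := hcon
      have hd1 : dist (sFreq nAB.1 (fun k => ι k ω)) pA < δ :=
        (dist_pi_lt_iff hδpos).2 h1
      have hd2 : dist (sFreq nAB.2 (fun l => κ l ω)) pB < δ :=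
        (dist_pi_lt_iff hδpos).2 h2
      have hdp : dist (sFreq nAB.1 (fun k => ι k ω), sFreq nAB.2 (fun l => κ l ω))
          (pA, pB) < δ := by
        rw [Prod.dist_eq]
        exact max_lt hd1 hd2
      exact absurd (hball hdp) (not_lt.2 (le_of_lt hω))
    calc P _ ≤ P ((⋃ i : Fin nAs, {ω | δ ≤ dist (sFreq nAB.1 (fun k => ι k ω) i) (pA i)}) ∪
          (⋃ j : Fin nBs, {ω | δ ≤ dist (sFreq nAB.2 (fun l => κ l ω) j) (pB j)})) :=
        measure_mono hsub
      _ ≤ P (⋃ i : Fin nAs, {ω | δ ≤ dist (sFreq nAB.1 (fun k => ι k ω) i) (pA i)}) +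
          P (⋃ j : Fin nBs, {ω | δ ≤ dist (sFreq nAB.2 (fun l => κ l ω) j) (pB j)}) :=
        measure_union_le _ _
      _ ≤ _ := add_le_add (measure_iUnion_fintype_le _ _) (measure_iUnion_fintype_le _ _)
  have main : Tendsto (fun nAB : ℕ × ℕ =>
      P {ω | εp < dist (G (sFreq nAB.1 (fun k => ι k ω), sFreq nAB.2 (fun l => κ l ω)))
        (G (pA, pB))}) atTop (𝓝 0) :=
    tendsto_of_tendsto_of_tendsto_of_le_of_le
      (tendsto_const_nhds : Tendsto (fun _ : ℕ × ℕ => (0:ENNReal)) atTop (nhds 0)) hBnd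
      (fun nAB => zero_le) hle
  refine main.congr fun nAB => ?_
  exact congrArg P (Set.ext fun ω => iff_of_eq
    (congrArg (fun t => (εp < dist t (G (pA, pB)) : Prop)) (key nAB ω).symm))


end
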